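/- If G is a graph on n vertices with minimum degree at least 2, then the game total domination number of G satisfies γ_tg(G) ≤ 3n/4. -/

import Mathlib

open SimpleGraph Finset

inductive GameColor | white | green | blue | red
deriving DecidableEq

def GameColor.weight : GameColor → ℕ
  | white => 3
  | green => 2
  | blue => 1
  | red => 0

variable {V : Type} [Fintype V] [DecidableEq V]

/-- The set of vertices totally dominated by the played set `D`. -/
def totDom (G : SimpleGraph V) [DecidableRel G.Adj] (D : Finset V) : Finset V :=
  Finset.univ.filter fun u => ∃ v ∈ D, G.Adj u v

/-- A vertex `v` is a legal move if playing it totally dominates a new vertex. -/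
def isLegal (G : SimpleGraph V) [DecidableRel G.Adj] (D : Finset V) (v : V) : Prop :=
  ∃ u, G.Adj v u ∧ u ∉ totDom G D

instance (G : SimpleGraph V) [DecidableRel G.Adj] (D : Finset V) :
    DecidablePred (isLegal G D) := fun v =>
  decidable_of_iff (∃ u, G.Adj v u ∧ u ∉ totDom G D) Iff.rfl

/-- The color of a vertex in the partially total dominated graph with played set `D`. -/
def colorOf (G : SimpleGraph V) [DecidableRel G.Adj] (D : Finset V) (v : V) : GameColor :=
  if v ∈ totDom G D then
    (if isLegal G D v then .blue else .red)
  else (if v ∈ D then .green else .white)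

/-- The total weight of the colored graph. -/
def totalWeight (G : SimpleGraph V) [DecidableRel G.Adj] (D : Finset V) : ℕ :=
  ∑ v, (colorOf G D v).weight

/-- The residualGraph graph: delete red vertices and blue–blue edges. -/
def residualGraph (G : SimpleGraph V) [DecidableRel G.Adj] (D : Finset V) : SimpleGraph V where
  Adj u w := G.Adj u w ∧ colorOf G D u ≠ .red ∧ colorOf G D w ≠ .red ∧
      ¬(colorOf G D u = .blue ∧ colorOf G D w = .blue)
  symm := ⟨fun u w ⟨h, a, b, c⟩ => ⟨h.symm, b, a, fun ⟨x, y⟩ => c ⟨y, x⟩⟩⟩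
  loopless := ⟨fun u ⟨h, _⟩ => G.loopless.irrefl u h⟩

instance (G : SimpleGraph V) [DecidableRel G.Adj] (D : Finset V) :
    DecidableRel (residualGraph G D).Adj := fun u w =>
  decidable_of_iff (G.Adj u w ∧ colorOf G D u ≠ .red ∧ colorOf G D w ≠ .red ∧
      ¬(colorOf G D u = .blue ∧ colorOf G D w = .blue)) Iff.rfl

def legalMoves (G : SimpleGraph V) [DecidableRel G.Adj] (D : Finset V) : Finset V :=
  Finset.univ.filter (isLegal G D)

/-- The value of the total domination game from position `D` with `fuel` moves allowed,
where `isDom = true` when it is Dominator's turn (Dominator minimizes, Staller maximizes).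
Since each legal move totally dominates a new vertex, fuel `Fintype.card V` always suffices. -/
def gameVal (G : SimpleGraph V) [DecidableRel G.Adj] : Bool → ℕ → Finset V → ℕ
  | _, 0, _ => 0
  | isDom, n + 1, D =>
    if h : (legalMoves G D).Nonempty then
      if isDom then 1 + (legalMoves G D).inf' h fun v => gameVal G false n (insert v D)
      else 1 + (legalMoves G D).sup' h fun v => gameVal G true n (insert v D)
    else 0

/-- The game total domination number `γ_tg(G)`: Dominator starts, both play optimally. -/
def gtd (G : SimpleGraph V) [DecidableRel G.Adj] : ℕ :=
  gameVal G true (Fintype.card V) ∅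


section Proof

variable (G : SimpleGraph V) [DecidableRel G.Adj]

lemma mem_totDom {D : Finset V} {u : V} : u ∈ totDom G D ↔ ∃ v ∈ D, G.Adj u v := by
  simp [totDom]

lemma totDom_subset_insert (D : Finset V) (v : V) : totDom G D ⊆ totDom G (insert v D) := by
  intro u hu
  rw [mem_totDom] at hu ⊢
  obtain ⟨w, hw, hadj⟩ := hu
  exact ⟨w, Finset.mem_insert_of_mem hw, hadj⟩

lemma isLegal_of_insert {D : Finset V} {v x : V} (h : isLegal G (insert v D) x) :
    isLegal G D x := by
  obtain ⟨u, hadj, hu⟩ := h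
  exact ⟨u, hadj, fun c => hu (totDom_subset_insert G D v c)⟩

lemma weight_le_three (c : GameColor) : c.weight ≤ 3 := by
  cases c <;> simp [GameColor.weight]

lemma colorOf_eq_blue_iff {D : Finset V} {x : V} :
    colorOf G D x = .blue ↔ x ∈ totDom G D ∧ isLegal G D x := by
  unfold colorOf
  split_ifs with h1 h2 <;> simp_all

lemma weight_colorOf_mono (D : Finset V) (v x : V) :
    (colorOf G (insert v D) x).weight ≤ (colorOf G D x).weight := by
  unfold colorOf
  by_cases hx : x ∈ totDom G D
  · have hx' : x ∈ totDom G (insert v D) := totDom_subset_insert G D v hx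
    simp only [hx, hx', if_true]
    by_cases hl : isLegal G (insert v D) x
    · simp [hl, isLegal_of_insert G hl]
    · simp only [hl, if_false, GameColor.weight]
      split_ifs <;> simp [GameColor.weight]
  · simp only [hx, if_false]
    by_cases hD : x ∈ D
    · have hD' : x ∈ insert v D := Finset.mem_insert_of_mem hD
      simp only [hD, hD', if_true, GameColor.weight]
      split_ifs <;> simp [GameColor.weight]
    · simp only [hD, if_false, GameColor.weight]
      split_ifs <;> simp [GameColor.weight, weight_le_three]

lemma weight_played {D : Finset V} {v : V} (hv : isLegal G D v) :
    (colorOf G (insert v D) v).weight + 1 ≤ (colorOf G D v).weight := by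
  unfold colorOf
  by_cases hx : v ∈ totDom G D
  · have hx' : v ∈ totDom G (insert v D) := totDom_subset_insert G D v hx
    have hnl : ¬ isLegal G (insert v D) v := by
      rintro ⟨u, hadj, hu⟩
      exact hu (mem_totDom G |>.2 ⟨v, Finset.mem_insert_self v D, hadj.symm⟩)
    simp [hx, hx', hnl, hv, GameColor.weight]
  · have hD : v ∉ D := by
      intro hD
      obtain ⟨u, hadj, hu⟩ := hv
      exact hu (mem_totDom G |>.2 ⟨v, hD, hadj.symm⟩)
    have hx' : v ∉ totDom G (insert v D) := by
      intro h
      obtain ⟨w, hw, hadj⟩ := (mem_totDom G).1 h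
      rcases Finset.mem_insert.1 hw with rfl | hw
      · exact G.loopless.irrefl _ hadj
      · exact hx ((mem_totDom G).2 ⟨w, hw, hadj⟩)
    simp [hx, hx', hD, Finset.mem_insert_self, GameColor.weight]

lemma weight_newdom {D : Finset V} {v u : V} (hadj : G.Adj v u) (hu : u ∉ totDom G D) :
    (colorOf G (insert v D) u).weight + 2 ≤ (colorOf G D u).weight := by
  have hu' : u ∈ totDom G (insert v D) :=
    (mem_totDom G).2 ⟨v, Finset.mem_insert_self v D, hadj.symm⟩
  unfold colorOf
  by_cases hD : u ∈ D
  · have hnl : ¬ isLegal G (insert v D) u := by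
      rintro ⟨z, hadjz, hz⟩
      exact hz (totDom_subset_insert G D v ((mem_totDom G).2 ⟨u, hD, hadjz.symm⟩))
    simp [hu, hu', hD, hnl, GameColor.weight]
  · simp only [hu, hu', hD, if_true, if_false, GameColor.weight]
    split_ifs <;> simp [GameColor.weight]

lemma sum_split (f g : V → ℕ) (t : Finset V) (k : ℕ)
    (hmono : ∀ x, f x ≤ g x)
    (ht : (∑ x ∈ t, f x) + k ≤ ∑ x ∈ t, g x) :
    (∑ x, f x) + k ≤ ∑ x, g x := by
  have h1 : ∑ x ∈ Finset.univ \ t, f x ≤ ∑ x ∈ Finset.univ \ t, g x :=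
    Finset.sum_le_sum fun x _ => hmono x
  have e1 : (∑ x ∈ Finset.univ \ t, f x) + ∑ x ∈ t, f x = ∑ x, f x :=
    Finset.sum_sdiff (Finset.subset_univ t)
  have e2 : (∑ x ∈ Finset.univ \ t, g x) + ∑ x ∈ t, g x = ∑ x, g x :=
    Finset.sum_sdiff (Finset.subset_univ t)
  omega

lemma drop_three {D : Finset V} {v : V} (hv : isLegal G D v) :
    totalWeight G (insert v D) + 3 ≤ totalWeight G D := by
  obtain ⟨u, hadj, hu⟩ := hv
  have hne : v ≠ u := G.ne_of_adj hadj
  apply sum_split _ _ ({v, u} : Finset V) 3 (weight_colorOf_mono G D v)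
  rw [Finset.sum_pair hne, Finset.sum_pair hne]
  have h1 := weight_played G ⟨u, hadj, hu⟩
  have h2 := weight_newdom G hadj hu
  omega

lemma drop_five {D : Finset V} {v u1 u2 : V} (hadj1 : G.Adj v u1) (hadj2 : G.Adj v u2)
    (hne : u1 ≠ u2) (h1 : u1 ∉ totDom G D) (h2 : u2 ∉ totDom G D) :
    totalWeight G (insert v D) + 5 ≤ totalWeight G D := by
  have hv1 : v ≠ u1 := G.ne_of_adj hadj1
  have hv2 : v ≠ u2 := G.ne_of_adj hadj2
  apply sum_split _ _ ({v, u1, u2} : Finset V) 5 (weight_colorOf_mono G D v)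
  have hvnot : v ∉ ({u1, u2} : Finset V) := by simp [hv1, hv2]
  rw [Finset.sum_insert hvnot, Finset.sum_insert hvnot,
    Finset.sum_pair hne, Finset.sum_pair hne]
  have hp := weight_played G ⟨u1, hadj1, h1⟩
  have hd1 := weight_newdom G hadj1 h1
  have hd2 := weight_newdom G hadj2 h2
  omega

lemma Uset_ssubset {D : Finset V} {v : V} (hv : isLegal G D v) :
    (Finset.univ.filter fun x => x ∉ totDom G (insert v D)) ⊂
      (Finset.univ.filter fun x => x ∉ totDom G D) := by
  obtain ⟨u, hadj, hu⟩ := hv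
  have hsub : (Finset.univ.filter fun x => x ∉ totDom G (insert v D)) ⊆
      (Finset.univ.filter fun x => x ∉ totDom G D) := by
    intro x hx
    simp only [Finset.mem_filter, Finset.mem_univ, true_and] at hx ⊢
    exact fun c => hx (totDom_subset_insert G D v c)
  refine (Finset.ssubset_iff_of_subset hsub).2 ⟨u, ?_, ?_⟩
  · simp only [Finset.mem_filter, Finset.mem_univ, true_and]
    exact hu
  · simp only [Finset.mem_filter, Finset.mem_univ, true_and, not_not]
    exact (mem_totDom G).2 ⟨v, Finset.mem_insert_self v D, hadj.symm⟩

lemma gameVal_true_eq {D : Finset V} {f : ℕ} (h' : (legalMoves G D).Nonempty) :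
    gameVal G true (f+1) D =
      1 + (legalMoves G D).inf' h' fun v => gameVal G false f (insert v D) := by
  rw [gameVal, dif_pos h']
  simp

lemma gameVal_false_eq {D : Finset V} {f : ℕ} (h' : (legalMoves G D).Nonempty) :
    gameVal G false (f+1) D =
      1 + (legalMoves G D).sup' h' fun v => gameVal G true f (insert v D) := by
  rw [gameVal, dif_pos h']
  simp

lemma gameVal_le_card (fuel : ℕ) (b : Bool) (D : Finset V) :
    gameVal G b fuel D ≤ (Finset.univ.filter fun x => x ∉ totDom G D).card := by
  induction fuel generalizing b D with
  | zero => simp [gameVal]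
  | succ f ih =>
    by_cases h : (legalMoves G D).Nonempty
    · have hcard : ∀ v ∈ legalMoves G D,
          (Finset.univ.filter fun x => x ∉ totDom G (insert v D)).card + 1 ≤
            (Finset.univ.filter fun x => x ∉ totDom G D).card := by
        intro v hv
        have hleg : isLegal G D v := (Finset.mem_filter.1 hv).2
        exact Finset.card_lt_card (Uset_ssubset G hleg)
      obtain ⟨v0, hv0⟩ := h
      cases b with
      | true =>
        have hle : (legalMoves G D).inf' ⟨v0, hv0⟩ (fun v => gameVal G false f (insert v D)) ≤
            gameVal G false f (insert v0 D) := Finset.inf'_le _ hv0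
        have := ih false (insert v0 D)
        have := hcard v0 hv0
        rw [gameVal_true_eq G (⟨v0, hv0⟩ : (legalMoves G D).Nonempty)]
        omega
      | false =>
        have hle : (legalMoves G D).sup' ⟨v0, hv0⟩ (fun v => gameVal G true f (insert v D)) + 1 ≤
            (Finset.univ.filter fun x => x ∉ totDom G D).card := by
          have h1 : ∀ v ∈ legalMoves G D, gameVal G true f (insert v D) + 1 ≤
              (Finset.univ.filter fun x => x ∉ totDom G D).card := by
            intro v hv
            have := ih true (insert v D)
            have := hcard v hv
            omega
          have h2 : (Finset.univ.filter fun x => x ∉ totDom G D).card ≠ 0 := by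
            have := hcard v0 hv0
            omega
          have h3 := Finset.sup'_le (⟨v0, hv0⟩ : (legalMoves G D).Nonempty)
            (fun v => gameVal G true f (insert v D))
            (fun v hv => Nat.le_sub_one_of_lt (h1 v hv))
          omega
        rw [gameVal_false_eq G (⟨v0, hv0⟩ : (legalMoves G D).Nonempty)]
        omega
    · simp [gameVal, h]

lemma star_bound (hmin : ∀ v, 2 ≤ G.degree v) {D : Finset V}
    (hstar : ∀ w, isLegal G D w → ∀ u1, G.Adj w u1 → u1 ∉ totDom G D →
      ∀ u2, G.Adj w u2 → u2 ∉ totDom G D → u1 = u2) :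
    4 * (Finset.univ.filter fun x => x ∉ totDom G D).card ≤ totalWeight G D := by
  set U := Finset.univ.filter fun x => x ∉ totDom G D with hU
  set B := Finset.univ.filter fun x => colorOf G D x = GameColor.blue with hB
  have memU : ∀ {x}, x ∈ U → x ∉ totDom G D := by
    intro x hx
    exact (Finset.mem_filter.1 hx).2
  have memB : ∀ {x}, x ∈ B ↔ (x ∈ totDom G D ∧ isLegal G D x) := by
    intro x
    rw [hB, Finset.mem_filter]
    simp [colorOf_eq_blue_iff]
  -- pointwise bound
  have key1 : ∀ u ∈ U, 4 ≤ (colorOf G D u).weight + (G.neighborFinset u ∩ B).card := by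
    intro u hu
    have hutd : u ∉ totDom G D := memU hu
    by_cases hD : u ∈ D
    · -- green vertex: all neighbors blue
      have hcol : colorOf G D u = GameColor.green := by
        unfold colorOf
        simp [hutd, hD]
      have hnb : G.neighborFinset u ∩ B = G.neighborFinset u := by
        apply Finset.inter_eq_left.2
        intro t ht
        have hadj : G.Adj u t := (SimpleGraph.mem_neighborFinset G u t).1 ht
        refine memB.2 ⟨(mem_totDom G).2 ⟨u, hD, hadj.symm⟩, ⟨u, hadj.symm, hutd⟩⟩
      rw [hcol, hnb, G.card_neighborFinset_eq_degree]
      have := hmin u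
      simp only [GameColor.weight]
      omega
    · -- white vertex: at most one non-blue neighbor
      have hcol : colorOf G D u = GameColor.white := by
        unfold colorOf
        simp [hutd, hD]
      have hsd : (G.neighborFinset u \ B).card ≤ 1 := by
        apply Finset.card_le_one.2
        intro a ha b hb
        obtain ⟨haN, haB⟩ := Finset.mem_sdiff.1 ha
        obtain ⟨hbN, hbB⟩ := Finset.mem_sdiff.1 hb
        have hadja : G.Adj u a := (SimpleGraph.mem_neighborFinset G u a).1 haN
        have hadjb : G.Adj u b := (SimpleGraph.mem_neighborFinset G u b).1 hbN
        have hatd : a ∉ totDom G D := by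
          intro h
          exact haB (memB.2 ⟨h, ⟨u, hadja.symm, hutd⟩⟩)
        have hbtd : b ∉ totDom G D := by
          intro h
          exact hbB (memB.2 ⟨h, ⟨u, hadjb.symm, hutd⟩⟩)
        exact hstar u ⟨a, hadja, hatd⟩ a hadja hatd b hadjb hbtd
      have hcards : (G.neighborFinset u \ B).card + (G.neighborFinset u ∩ B).card =
          (G.neighborFinset u).card := Finset.card_sdiff_add_card_inter _ _
      have hdeg : 2 ≤ (G.neighborFinset u).card := by
        rw [G.card_neighborFinset_eq_degree]
        exact hmin u
      rw [hcol]
      simp only [GameColor.weight]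
      omega
  -- disjointness of blue neighborhoods
  have key2 : (∑ u ∈ U, (G.neighborFinset u ∩ B).card) ≤ B.card := by
    have hdisj : ∀ x ∈ U, ∀ y ∈ U, x ≠ y →
        Disjoint (G.neighborFinset x ∩ B) (G.neighborFinset y ∩ B) := by
      intro x hx y hy hne
      rw [Finset.disjoint_left]
      intro b hbx hby
      obtain ⟨hbNx, hbB⟩ := Finset.mem_inter.1 hbx
      obtain ⟨hbNy, _⟩ := Finset.mem_inter.1 hby
      have hadjx : G.Adj b x := ((SimpleGraph.mem_neighborFinset G x b).1 hbNx).symm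
      have hadjy : G.Adj b y := ((SimpleGraph.mem_neighborFinset G y b).1 hbNy).symm
      obtain ⟨_, hbleg⟩ := memB.1 hbB
      exact hne (hstar b hbleg x hadjx (memU hx) y hadjy (memU hy))
    rw [← Finset.card_biUnion hdisj]
    apply Finset.card_le_card
    intro b hb
    obtain ⟨u, _, hbu⟩ := Finset.mem_biUnion.1 hb
    exact (Finset.mem_inter.1 hbu).2
  -- sum of weights over U plus blues is at most total weight
  have key3 : (∑ u ∈ U, (colorOf G D u).weight) + B.card ≤ totalWeight G D := by
    have hUB : Disjoint U B := by
      rw [Finset.disjoint_left]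
      intro x hx hxB
      exact (memU hx) (memB.1 hxB).1
    have hBsum : ∑ x ∈ B, (colorOf G D x).weight = B.card := by
      have hone : ∀ x ∈ B, (colorOf G D x).weight = 1 := by
        intro x hx
        rw [(Finset.mem_filter.1 hx).2]
        rfl
      rw [Finset.sum_congr rfl hone, Finset.sum_const, smul_eq_mul, mul_one]
    calc (∑ u ∈ U, (colorOf G D u).weight) + B.card
        = ∑ x ∈ U ∪ B, (colorOf G D x).weight := by rw [Finset.sum_union hUB, hBsum]
      _ ≤ ∑ x, (colorOf G D x).weight :=
          Finset.sum_le_sum_of_subset (Finset.subset_univ _)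
      _ = totalWeight G D := rfl
  have hsum : ∑ u ∈ U, 4 ≤
      ∑ u ∈ U, ((colorOf G D u).weight + (G.neighborFinset u ∩ B).card) :=
    Finset.sum_le_sum key1
  rw [Finset.sum_add_distrib] at hsum
  rw [Finset.sum_const, smul_eq_mul] at hsum
  omega

lemma main_bound (hmin : ∀ v, 2 ≤ G.degree v) (fuel : ℕ) (D : Finset V) :
    gameVal G true fuel D * 4 ≤ totalWeight G D ∧
      gameVal G false fuel D * 4 ≤ totalWeight G D + 1 := by
  induction fuel generalizing D with
  | zero => simp [gameVal]
  | succ f ih =>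
    constructor
    · -- Dominator's turn
      by_cases hstar : ∀ w, isLegal G D w → ∀ u1, G.Adj w u1 → u1 ∉ totDom G D →
          ∀ u2, G.Adj w u2 → u2 ∉ totDom G D → u1 = u2
      · have h1 := gameVal_le_card G (f + 1) true D
        have h2 := star_bound G hmin hstar
        omega
      · push_neg at hstar
        obtain ⟨v, hvleg, u1, ha1, h1, u2, ha2, h2, hne⟩ := hstar
        have hvmem : v ∈ legalMoves G D := Finset.mem_filter.2 ⟨Finset.mem_univ v, hvleg⟩
        have hne' : (legalMoves G D).Nonempty := ⟨v, hvmem⟩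
        rw [gameVal_true_eq G hne']
        have hinf : (legalMoves G D).inf' hne' (fun v => gameVal G false f (insert v D)) ≤
            gameVal G false f (insert v D) := Finset.inf'_le _ hvmem
        have hS := (ih (insert v D)).2
        have hd5 := drop_five G ha1 ha2 hne h1 h2
        omega
    · -- Staller's turn
      by_cases h : (legalMoves G D).Nonempty
      · rw [gameVal_false_eq G h]
        obtain ⟨v, hv, hveq⟩ := Finset.exists_mem_eq_sup' h
          (fun v => gameVal G true f (insert v D))
        rw [hveq]
        have hD := (ih (insert v D)).1
        have hd3 := drop_three G (Finset.mem_filter.1 hv).2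
        omega
      · rw [gameVal, dif_neg h]
        omega

end Proof

/-- If `G` is a graph on `n` vertices with minimum degree at least 2, then
`γ_tg(G) ≤ 3n/4`. -/
theorem stmt13 (G : SimpleGraph V) [DecidableRel G.Adj]
    (hmin : ∀ v, 2 ≤ G.degree v) :
    (gtd G : ℚ) ≤ 3 * (Fintype.card V) / 4 := by
  have hwhite : ∀ v : V, colorOf G (∅ : Finset V) v = GameColor.white := by
    intro v
    unfold colorOf
    simp [totDom]
  have hPhi : totalWeight G (∅ : Finset V) = 3 * Fintype.card V := by
    unfold totalWeight
    rw [Finset.sum_congr rfl (fun v _ => by rw [hwhite v])]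
    simp [GameColor.weight, Finset.card_univ, mul_comm]
  have h4 : gtd G * 4 ≤ 3 * Fintype.card V := by
    have := (main_bound G hmin (Fintype.card V) ∅).1
    rw [hPhi] at this
    exact this
  rw [le_div_iff₀ (by norm_num : (0 : ℚ) < 4)]
  exact_mod_cast h4
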